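/- arXiv:math/0611923 — 2 statements merged into one kernel-verified Lean document; each statement's English description precedes it below -/
import Mathlib

section
/- For every n ≥ 1, the number of permutations π ∈ S_n that avoid the generalized pattern 12-3 and satisfy π_1 = n equals the Bell number B_{n-1}; and for every k with 1 ≤ k ≤ n-1, the number of permutations π ∈ S_n that avoid 12-3 and satisfy π_1 = k equals ∇^{n-k-1}(B_{n-1}) = Σ_{i=0}^{n-k-1} (-1)^i · C(n-k-1, i) · B_{n-1-i}. -/
open Finset Equiv

/-- `π` avoids the generalized pattern 12-3. -/
def Avoids12d3 {n : ℕ} (π : Equiv.Perm (Fin n)) : Prop :=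
  ¬ ∃ (i j : Fin n) (h : i.1 + 1 < n), i.1 + 1 < j.1 ∧ π i < π ⟨i.1 + 1, h⟩ ∧ π ⟨i.1 + 1, h⟩ < π j

/-- The `m`-th Bell number: the number of partitions of a set with `m` elements,
equivalently the number of equivalence relations (setoids) on `Fin m`. -/
noncomputable def bell (m : ℕ) : ℕ := Nat.card (Setoid (Fin m))

instance setoidFinite (α : Type*) [Finite α] : Finite (Setoid α) :=
  Finite.of_injective (fun s : Setoid α => (fun a b => s a b : α → α → Prop))
    (fun s t h => Setoid.ext fun a b => by
      have := congrFun (congrFun h a) b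
      simp only at this
      rw [this])

def setoidCongr {α β : Type*} (e : α ≃ β) : Setoid α ≃ Setoid β where
  toFun s := Setoid.comap e.symm s
  invFun s := Setoid.comap e s
  left_inv s := Setoid.ext fun a b => by
    show s (e.symm (e a)) (e.symm (e b)) ↔ s a b
    simp
  right_inv s := Setoid.ext fun a b => by
    show s (e (e.symm a)) (e (e.symm b)) ↔ s a b
    simp

lemma bell_card (α : Type*) [Fintype α] : Nat.card (Setoid α) = bell (Fintype.card α) :=
  Nat.card_congr (setoidCongr (Fintype.equivFin α))

lemma bell_zero : bell 0 = 1 := by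
  have h1 : Subsingleton (Setoid (Fin 0)) := ⟨fun a b => Setoid.ext fun x => x.elim0⟩
  have h2 : Nonempty (Setoid (Fin 0)) := ⟨⊥⟩
  rw [bell, Nat.card_eq_one_iff_unique]
  exact ⟨h1, h2⟩

section OptionDecomp

variable {α : Type*} [Fintype α] [DecidableEq α]

open scoped Classical in
/-- Decompose a setoid on `Option α` into: the set of elements related to `none`,
and the restricted setoid on the rest. -/
noncomputable def optionSetoidEquiv :
    Setoid (Option α) ≃ Σ s : Finset α, Setoid {x : α // x ∉ s} where
  toFun r := ⟨univ.filter (fun x => r (some x) none),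
    Setoid.comap (fun x => some x.val) r⟩
  invFun st :=
    { r := fun a b =>
        match a, b with
        | none, none => True
        | none, some y => y ∈ st.1
        | some x, none => x ∈ st.1
        | some x, some y => (x ∈ st.1 ∧ y ∈ st.1) ∨
            ∃ (hx : x ∉ st.1) (hy : y ∉ st.1), st.2 ⟨x, hx⟩ ⟨y, hy⟩
      iseqv := by
        constructor
        · rintro (_ | x)
          · trivial
          · by_cases hx : x ∈ st.1
            · exact Or.inl ⟨hx, hx⟩
            · exact Or.inr ⟨hx, hx, st.2.refl _⟩
        · rintro (_ | x) (_ | y) h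
          · trivial
          · exact h
          · exact h
          · rcases h with ⟨h1, h2⟩ | ⟨h1, h2, h3⟩
            · exact Or.inl ⟨h2, h1⟩
            · exact Or.inr ⟨h2, h1, st.2.symm h3⟩
        · rintro (_ | x) (_ | y) (_ | z) h1 h2
          · trivial
          · exact h2
          · trivial
          · rcases h2 with ⟨hy, hz⟩ | ⟨hy, hz, h⟩
            · exact hz
            · exact absurd h1 hy
          · exact h1
          · exact Or.inl ⟨h1, h2⟩
          · rcases h1 with ⟨hx, hy⟩ | ⟨hx, hy, h⟩
            · exact hx
            · exact absurd h2 hy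
          · rcases h1 with ⟨hx, hy⟩ | ⟨hx, hy, h⟩
            · rcases h2 with ⟨hy', hz⟩ | ⟨hy', hz, h'⟩
              · exact Or.inl ⟨hx, hz⟩
              · exact absurd hy hy'
            · rcases h2 with ⟨hy', hz⟩ | ⟨hy', hz, h'⟩
              · exact absurd hy' hy
              · exact Or.inr ⟨hx, hz, st.2.trans h h'⟩ }
  left_inv r := by
    apply Setoid.ext
    rintro (_ | x) (_ | y)
    · simpa using r.refl none
    · show (y ∈ univ.filter fun x => r (some x) none) ↔ _
      rw [mem_filter]
      exact ⟨fun h => r.symm h.2, fun h => ⟨mem_univ _, r.symm h⟩⟩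
    · show (x ∈ univ.filter fun x => r (some x) none) ↔ _
      rw [mem_filter]
      exact ⟨fun h => h.2, fun h => ⟨mem_univ _, h⟩⟩
    · show ((x ∈ univ.filter fun a => r (some a) none) ∧ _) ∨ _ ↔ _
      constructor
      · rintro (⟨h1, h2⟩ | ⟨h1, h2, h3⟩)
        · exact r.trans (mem_filter.1 h1).2 (r.symm (mem_filter.1 h2).2)
        · exact h3
      · intro h
        by_cases hx : r (some x) none
        · exact Or.inl ⟨mem_filter.2 ⟨mem_univ _, hx⟩, mem_filter.2 ⟨mem_univ _, r.trans (r.symm h) hx⟩⟩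
        · refine Or.inr ⟨fun hc => hx (mem_filter.1 hc).2, fun hc => hx (r.trans h (mem_filter.1 hc).2), h⟩
  right_inv st := by
    rcases st with ⟨s, t⟩
    have key : ∀ (s₁ s₂ : Finset α), s₁ = s₂ →
        ∀ (t₁ : Setoid {x : α // x ∉ s₁}) (t₂ : Setoid {x : α // x ∉ s₂}),
        (∀ (x : α) (hx₁ : x ∉ s₁) (hx₂ : x ∉ s₂) (y : α) (hy₁ : y ∉ s₁) (hy₂ : y ∉ s₂),
          t₁ ⟨x, hx₁⟩ ⟨y, hy₁⟩ ↔ t₂ ⟨x, hx₂⟩ ⟨y, hy₂⟩) →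
        (⟨s₁, t₁⟩ : Σ s : Finset α, Setoid {x : α // x ∉ s}) = ⟨s₂, t₂⟩ := by
      rintro s₁ s₂ rfl t₁ t₂ h
      exact congrArg (Sigma.mk s₁) (Setoid.ext fun a b => h a.1 a.2 a.2 b.1 b.2 b.2)
    refine key _ _ ?_ _ _ ?_
    · ext x; simp; exact Iff.rfl
    · intro x hx₁ hx₂ y hy₁ hy₂
      show ((x ∈ s ∧ y ∈ s) ∨ ∃ (hx : x ∉ s) (hy : y ∉ s), t ⟨x, hx⟩ ⟨y, hy⟩) ↔ _
      constructor
      · rintro (⟨h1, h2⟩ | ⟨h1, h2, h3⟩)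
        · exact absurd h1 hx₂
        · exact h3
      · intro h
        exact Or.inr ⟨hx₂, hy₂, h⟩

end OptionDecomp

lemma bell_succ (m : ℕ) : bell (m + 1) = ∑ i ∈ range (m + 1), m.choose i * bell i := by
  classical
  have e1 : Setoid (Fin (m + 1)) ≃ Setoid (Option (Fin m)) := setoidCongr (finSuccEquiv m)
  have key : bell (m + 1) = Nat.card (Σ s : Finset (Fin m), Setoid {x : Fin m // x ∉ s}) :=
    Nat.card_congr (e1.trans (optionSetoidEquiv (α := Fin m)))
  rw [key]
  haveI : ∀ s : Finset (Fin m), Fintype (Setoid {x : Fin m // x ∉ s}) :=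
    fun s => Fintype.ofFinite _
  rw [Nat.card_eq_fintype_card, Fintype.card_sigma]
  have hcard : ∀ s : Finset (Fin m),
      Fintype.card (Setoid {x : Fin m // x ∉ s}) = bell (m - s.card) := by
    intro s
    rw [← Nat.card_eq_fintype_card, bell_card]
    congr 1
    rw [Fintype.card_subtype_compl]
    simp
  calc ∑ s : Finset (Fin m), Fintype.card (Setoid {x : Fin m // x ∉ s})
      = ∑ s ∈ (univ : Finset (Fin m)).powerset, bell (m - s.card) := by
        rw [Finset.powerset_univ]
        exact Finset.sum_congr rfl fun s _ => hcard s
    _ = ∑ j ∈ range (m + 1), ∑ s ∈ powersetCard j (univ : Finset (Fin m)), bell (m - s.card) := by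
        rw [Finset.sum_powerset]
        simp
    _ = ∑ j ∈ range (m + 1), m.choose j * bell (m - j) := by
        refine Finset.sum_congr rfl fun j hj => ?_
        rw [Finset.sum_congr rfl (fun s hs => by
          rw [(Finset.mem_powersetCard.1 hs).2]), Finset.sum_const, card_powersetCard]
        simp [mul_comm]
    _ = ∑ i ∈ range (m + 1), m.choose i * bell i := by
        conv_rhs => rw [← Finset.sum_range_reflect (fun i => m.choose i * bell i) (m + 1)]
        refine Finset.sum_congr rfl fun j hj => ?_
        have hj' : j ≤ m := by
          simp only [mem_range] at hj; omega
        have h1 : m + 1 - 1 - j = m - j := by omega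
        rw [h1, Nat.choose_symm hj']

lemma bell_inv (p : ℕ) :
    ∑ i ∈ range (p + 1), (-1 : ℤ) ^ i * (p.choose i) * bell (p + 1 - i) = bell p := by
  have h0 : ∑ i ∈ range (p + 1), (-1 : ℤ) ^ i * (p.choose i) * bell (p + 1 - i)
      = ∑ j ∈ range (p + 1), (-1 : ℤ) ^ (p - j) * (p.choose j) * bell (j + 1) := by
    rw [← Finset.sum_range_reflect (fun j => (-1 : ℤ) ^ (p - j) * (p.choose j) * bell (j + 1)) (p + 1)]
    refine Finset.sum_congr rfl fun i hi => ?_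
    simp only [mem_range] at hi
    have h1 : p + 1 - 1 - i = p - i := by omega
    have h2 : p - (p - i) = i := by omega
    have h3 : p + 1 - i = (p - i) + 1 := by omega
    rw [h1, h2, Nat.choose_symm (by omega : i ≤ p), h3]
  rw [h0]
  have hexp : ∀ j ∈ range (p + 1),
      (-1 : ℤ) ^ (p - j) * (p.choose j) * bell (j + 1)
      = ∑ l ∈ range (p + 1), (-1 : ℤ) ^ (p - j) * (p.choose j) * (j.choose l) * bell l := by
    intro j hj
    simp only [mem_range] at hj
    have : (bell (j + 1) : ℤ) = ∑ l ∈ range (p + 1), (j.choose l : ℤ) * bell l := by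
      rw [bell_succ]
      push_cast
      refine Finset.sum_subset (by intro x hx; simp only [mem_range] at *; omega) ?_
      intro l hl hl2
      simp only [mem_range] at hl hl2
      rw [Nat.choose_eq_zero_of_lt (by omega)]
      simp
    rw [this, Finset.mul_sum]
    refine Finset.sum_congr rfl fun l _ => by ring
  rw [Finset.sum_congr rfl hexp, Finset.sum_comm]
  have hS : ∀ l ∈ range (p + 1),
      ∑ j ∈ range (p + 1), (-1 : ℤ) ^ (p - j) * (p.choose j) * (j.choose l) * bell l
      = (if l = p then 1 else 0) * bell l := by
    intro l hl
    simp only [mem_range] at hl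
    have hl' : l ≤ p := by omega
    rw [← Finset.sum_mul]
    congr 1
    have hsub : ∑ j ∈ range (p + 1), (-1 : ℤ) ^ (p - j) * (p.choose j) * (j.choose l)
        = ∑ j ∈ Finset.Ico l (p + 1), (-1 : ℤ) ^ (p - j) * (p.choose j) * (j.choose l) := by
      refine (Finset.sum_subset (by intro x hx; simp only [Finset.mem_Ico, mem_range] at *; omega) ?_).symm
      intro j hj hj2
      simp only [mem_range, Finset.mem_Ico] at hj hj2
      rw [Nat.choose_eq_zero_of_lt (by omega : j < l)]
      simp
    rw [hsub, Finset.sum_Ico_eq_sum_range]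
    have hq : p + 1 - l = (p - l) + 1 := by omega
    rw [hq]
    set q := p - l with hqdef
    have hterm : ∀ t ∈ range (q + 1),
        (-1 : ℤ) ^ (p - (l + t)) * (p.choose (l + t)) * ((l + t).choose l)
        = ((p.choose l : ℤ)) * ((-1 : ℤ) ^ q * ((-1 : ℤ) ^ t * (q.choose t))) := by
      intro t ht
      simp only [mem_range] at ht
      have ht' : t ≤ q := by omega
      have hcm : (p.choose (l + t)) * ((l + t).choose l) = p.choose l * (p - l).choose t := by
        have := Nat.choose_mul (n := p) (show l ≤ l + t by omega)
        simpa using this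
      have hsign : (-1 : ℤ) ^ (p - (l + t)) = (-1 : ℤ) ^ q * (-1 : ℤ) ^ t := by
        have h5 : p - (l + t) + t = q := by omega
        have h6 : ((-1 : ℤ) ^ t) * ((-1 : ℤ) ^ t) = 1 := by
          rw [← pow_add]
          exact Even.neg_one_pow ⟨t, rfl⟩
        calc (-1 : ℤ) ^ (p - (l + t))
            = (-1 : ℤ) ^ (p - (l + t)) * ((-1 : ℤ) ^ t * (-1 : ℤ) ^ t) := by rw [h6, mul_one]
          _ = (-1 : ℤ) ^ q * (-1 : ℤ) ^ t := by rw [← mul_assoc, ← pow_add, h5]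
      have hc : ((p.choose (l + t) : ℤ)) * ((l + t).choose l) = (p.choose l : ℤ) * (q.choose t) := by
        rw [hqdef]
        exact_mod_cast hcm
      rw [hsign]
      calc (-1 : ℤ) ^ q * (-1 : ℤ) ^ t * ↑(p.choose (l + t)) * ↑((l + t).choose l)
          = (-1 : ℤ) ^ q * (-1 : ℤ) ^ t * (↑(p.choose (l + t)) * ↑((l + t).choose l)) := by ring
        _ = (-1 : ℤ) ^ q * (-1 : ℤ) ^ t * (↑(p.choose l) * ↑(q.choose t)) := by rw [hc]
        _ = ↑(p.choose l) * ((-1 : ℤ) ^ q * ((-1 : ℤ) ^ t * ↑(q.choose t))) := by ring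
    rw [Finset.sum_congr rfl hterm, ← Finset.mul_sum, ← Finset.mul_sum,
      Int.alternating_sum_range_choose]
    by_cases hlp : l = p
    · subst hlp
      simp [hqdef]
    · have : q ≠ 0 := by omega
      simp [this, hlp]
  rw [Finset.sum_congr rfl hS]
  rw [Finset.sum_eq_single p (fun x _ hx => by simp [hx]) (fun h => absurd (self_mem_range_succ p) h)]
  simp

noncomputable def A (n k : ℕ) : ℕ :=
  Nat.card {π : Equiv.Perm (Fin n) //
    Avoids12d3 π ∧ ∃ h : 0 < n ∧ k < n, π ⟨0, h.1⟩ = ⟨k, h.2⟩}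

def extPerm {m : ℕ} (k : Fin (m + 1)) (σ : Equiv.Perm (Fin m)) : Equiv.Perm (Fin (m + 1)) :=
  (finSuccEquiv m).trans ((Equiv.optionCongr σ).trans (finSuccEquiv' k).symm)

lemma extPerm_zero {m : ℕ} (k : Fin (m + 1)) (σ : Equiv.Perm (Fin m)) :
    extPerm k σ ⟨0, Nat.succ_pos m⟩ = k := by
  have h0 : (⟨0, Nat.succ_pos m⟩ : Fin (m + 1)) = 0 := rfl
  simp [extPerm, h0]

lemma extPerm_succ {m : ℕ} (k : Fin (m + 1)) (σ : Equiv.Perm (Fin m)) (t : ℕ) (ht : t < m) :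
    extPerm k σ ⟨t + 1, by omega⟩ = k.succAbove (σ ⟨t, ht⟩) := by
  have h0 : (⟨t + 1, by omega⟩ : Fin (m + 1)) = (⟨t, ht⟩ : Fin m).succ := rfl
  rw [h0]
  show (finSuccEquiv' k).symm ((Equiv.optionCongr σ) ((finSuccEquiv m) (⟨t, ht⟩ : Fin m).succ)) = _
  rw [finSuccEquiv_succ, Equiv.optionCongr_apply, Option.map_some, finSuccEquiv'_symm_some]

lemma lt_succAbove_iff' {m : ℕ} (k : Fin (m + 1)) (a : Fin m) :
    k < k.succAbove a ↔ k.1 ≤ a.1 := by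
  rcases lt_or_ge a.1 k.1 with h | h
  · rw [Fin.succAbove_of_castSucc_lt _ _ (by simpa [Fin.lt_def] using h)]
    simp [Fin.lt_def]
    omega
  · rw [Fin.succAbove_of_le_castSucc _ _ (by simpa [Fin.le_def] using h)]
    simp [Fin.lt_def, Fin.val_succ]

lemma avoids_ext_iff {m : ℕ} (hm : 0 < m) (k : Fin (m + 1)) (σ : Equiv.Perm (Fin m)) :
    Avoids12d3 (extPerm k σ) ↔
      Avoids12d3 σ ∧ ((σ ⟨0, hm⟩).1 < k.1 ∨ (σ ⟨0, hm⟩).1 = m - 1) := by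
  have key2 : ∀ (a b : ℕ) (ha : a < m) (hb : b < m),
      extPerm k σ ⟨a + 1, by omega⟩ < extPerm k σ ⟨b + 1, by omega⟩ ↔ σ ⟨a, ha⟩ < σ ⟨b, hb⟩ := by
    intro a b ha hb
    rw [extPerm_succ k σ a ha, extPerm_succ k σ b hb, Fin.succAbove_lt_succAbove_iff]
  have key1 : ∀ (b : ℕ) (hb : b < m),
      extPerm k σ ⟨0, Nat.succ_pos m⟩ < extPerm k σ ⟨b + 1, by omega⟩ ↔ k.1 ≤ (σ ⟨b, hb⟩).1 := by
    intro b hb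
    rw [extPerm_zero, extPerm_succ k σ b hb, lt_succAbove_iff']
  have hmax : (σ ⟨0, hm⟩).1 ≠ m - 1 → ∃ j : Fin m, 0 < j.1 ∧ σ ⟨0, hm⟩ < σ j := by
    intro hne
    refine ⟨σ.symm ⟨m - 1, by omega⟩, ?_, ?_⟩
    · rcases Nat.eq_zero_or_pos (σ.symm ⟨m - 1, by omega⟩).1 with h | h
      swap
      · exact h
      · exfalso
        have : σ.symm ⟨m - 1, by omega⟩ = ⟨0, hm⟩ := Fin.ext h
        have h2 := congrArg σ this
        rw [Equiv.apply_symm_apply] at h2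
        exact hne (by rw [← h2])
    · rw [Equiv.apply_symm_apply, Fin.lt_def]
      have := (σ ⟨0, hm⟩).2
      simp only []
      omega
  constructor
  · intro hπ
    constructor
    · rintro ⟨⟨iv, hivm⟩, ⟨jv, hjvm⟩, h, h1, h2, h3⟩
      have h' : iv + 1 < m := h
      have h1' : iv + 1 < jv := h1
      exact hπ ⟨⟨iv + 1, by omega⟩, ⟨jv + 1, by omega⟩, show iv + 1 + 1 < m + 1 by omega,
        show iv + 1 + 1 < jv + 1 by omega,
        (key2 iv (iv + 1) hivm h').mpr h2,
        (key2 (iv + 1) jv h' hjvm).mpr h3⟩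
    · by_contra hcond
      push_neg at hcond
      obtain ⟨hk, hne⟩ := hcond
      obtain ⟨j, hj0, hjlt⟩ := hmax hne
      refine hπ ⟨⟨0, by omega⟩, ⟨j.1 + 1, by omega⟩, show 0 + 1 < m + 1 by omega,
        show 0 + 1 < j.1 + 1 by omega, ?_, ?_⟩
      · exact (key1 0 hm).mpr (by omega)
      · exact (key2 0 j.1 hm j.isLt).mpr hjlt
  · rintro ⟨hσ, hcond⟩ ⟨⟨iv, hiv⟩, ⟨jv, hjv⟩, h, h1, h2, h3⟩
    have h' : iv + 1 < m + 1 := h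
    have h1' : iv + 1 < jv := h1
    rcases jv with _ | u
    · omega
    rcases iv with _ | s
    · -- i = 0 : contradiction with hcond
      have hk := (key1 0 hm).mp h2
      have hu : u < m := by omega
      have hlt := (key2 0 u hm hu).mp h3
      rw [Fin.lt_def] at hlt
      have hb := (σ ⟨u, hu⟩).2
      rcases hcond with hc | hc
      · omega
      · omega
    · -- i = s+1 : pattern in σ
      have hsm : s + 1 < m := by omega
      have hum : u < m := by omega
      exact hσ ⟨⟨s, by omega⟩, ⟨u, hum⟩, show s + 1 < m by omega, show s + 1 < u by omega,
        (key2 s (s + 1) (by omega) hsm).mp h2,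
        (key2 (s + 1) u hsm hum).mp h3⟩

lemma card_step {m : ℕ} (hm : 0 < m) (k : Fin (m + 1)) :
    Nat.card {π : Equiv.Perm (Fin (m + 1)) // Avoids12d3 π ∧ π ⟨0, Nat.succ_pos m⟩ = k}
      = Nat.card {σ : Equiv.Perm (Fin m) //
          Avoids12d3 σ ∧ ((σ ⟨0, hm⟩).1 < k.1 ∨ (σ ⟨0, hm⟩).1 = m - 1)} := by
  refine (Nat.card_congr (Equiv.ofBijective
    (fun σ : {σ : Equiv.Perm (Fin m) //
          Avoids12d3 σ ∧ ((σ ⟨0, hm⟩).1 < k.1 ∨ (σ ⟨0, hm⟩).1 = m - 1)} =>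
      (⟨extPerm k σ.1, (avoids_ext_iff hm k σ.1).mpr σ.2, extPerm_zero k σ.1⟩ :
        {π : Equiv.Perm (Fin (m + 1)) // Avoids12d3 π ∧ π ⟨0, Nat.succ_pos m⟩ = k}))
    ⟨?_, ?_⟩)).symm
  · -- injective
    intro σ τ hst
    have h1 : extPerm k σ.1 = extPerm k τ.1 := congrArg Subtype.val hst
    refine Subtype.ext (Equiv.ext fun i => ?_)
    have h2 : extPerm k σ.1 ⟨i.1 + 1, by omega⟩ = extPerm k τ.1 ⟨i.1 + 1, by omega⟩ := by
      rw [h1]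
    rw [extPerm_succ k σ.1 i.1 i.isLt, extPerm_succ k τ.1 i.1 i.isLt] at h2
    have h3 := Fin.succAbove_right_injective h2
    simpa using h3
  · -- surjective
    rintro ⟨π, hav, h0⟩
    set e : Option (Fin m) ≃ Option (Fin m) :=
      ((finSuccEquiv m).symm.trans π).trans (finSuccEquiv' k) with he
    set σ : Equiv.Perm (Fin m) := e.removeNone with hσ
    have key : extPerm k σ = π := by
      refine Equiv.ext fun x => ?_
      rcases x with ⟨xv, hxv⟩
      rcases xv with _ | t
      · rw [extPerm_zero]
        exact h0.symm
      · have ht : t < m := by omega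
        rw [extPerm_succ k σ t ht]
        have hne : π ((⟨t, ht⟩ : Fin m).succ) ≠ k := by
          rw [← h0]
          intro hc
          have h4 := π.injective hc
          exact absurd (congrArg Fin.val h4) (by simp [Fin.val_succ])
        obtain ⟨j, hj⟩ := Fin.exists_succAbove_eq hne
        have hes : e (some ⟨t, ht⟩) = some j := by
          show finSuccEquiv' k (π ((finSuccEquiv m).symm (some ⟨t, ht⟩))) = some j
          rw [finSuccEquiv_symm_some, ← hj, finSuccEquiv'_succAbove]
        have h5 := Equiv.removeNone_some e ⟨j, hes⟩
        rw [hes] at h5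
        have h6 : σ ⟨t, ht⟩ = j := Option.some_injective _ h5
        rw [h6, hj]
        rfl
    have hav' : Avoids12d3 (extPerm k σ) ∧
        ((σ ⟨0, hm⟩).1 < k.1 ∨ (σ ⟨0, hm⟩).1 = m - 1) := by
      rw [key]
      exact ⟨hav, ((avoids_ext_iff hm k σ).mp (key ▸ hav)).2⟩
    exact ⟨⟨σ, (avoids_ext_iff hm k σ).mp (key ▸ hav)⟩, Subtype.ext key⟩

lemma A_eq (n k : ℕ) (hn : 0 < n) (hk : k < n) :
    A n k = Nat.card {π : Equiv.Perm (Fin n) // Avoids12d3 π ∧ π ⟨0, hn⟩ = ⟨k, hk⟩} :=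
  Nat.card_congr (Equiv.subtypeEquivRight (fun π => by
    constructor
    · rintro ⟨hav, ⟨h, heq⟩⟩
      exact ⟨hav, heq⟩
    · rintro ⟨hav, heq⟩
      exact ⟨hav, ⟨hn, hk⟩, heq⟩))

lemma card_filter_split {m : ℕ} (hm : 0 < m) (P : Fin m → Prop) [DecidablePred P] :
    Nat.card {σ : Equiv.Perm (Fin m) // Avoids12d3 σ ∧ P (σ ⟨0, hm⟩)}
      = ∑ v ∈ Finset.univ.filter P,
          Nat.card {σ : Equiv.Perm (Fin m) // Avoids12d3 σ ∧ σ ⟨0, hm⟩ = v} := by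
  classical
  rw [Nat.card_eq_fintype_card, Fintype.card_subtype]
  rw [Finset.card_eq_sum_card_fiberwise (f := fun σ => σ ⟨0, hm⟩)
    (t := Finset.univ.filter P)
    (fun σ hσ => by
      exact Finset.mem_filter.2 ⟨mem_univ _, (Finset.mem_filter.1 hσ).2.2⟩)]
  refine Finset.sum_congr rfl fun v hv => ?_
  rw [Nat.card_eq_fintype_card, Fintype.card_subtype]
  congr 1
  rw [Finset.filter_filter]
  refine Finset.filter_congr fun σ _ => ?_
  simp only [mem_filter, mem_univ, true_and] at hv
  constructor
  · rintro ⟨⟨h1, h2⟩, h3⟩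
    exact ⟨h1, h3⟩
  · rintro ⟨h1, h3⟩
    exact ⟨⟨h1, h3 ▸ hv⟩, h3⟩

lemma A_rec (m k : ℕ) (hm : 0 < m) (hk : k < m + 1) :
    A (m + 1) k = ∑ v ∈ (Finset.range m).filter (fun v => v < k ∨ v = m - 1), A m v := by
  rw [A_eq (m + 1) k (Nat.succ_pos m) hk, card_step hm ⟨k, hk⟩,
    card_filter_split hm (fun v => v.1 < k ∨ v.1 = m - 1)]
  have h1 : ∀ v : Fin m,
      Nat.card {σ : Equiv.Perm (Fin m) // Avoids12d3 σ ∧ σ ⟨0, hm⟩ = v} = A m v.1 := by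
    intro v
    rw [A_eq m v.1 hm v.2]
  rw [Finset.sum_congr rfl fun v _ => h1 v]
  rw [Finset.sum_filter]
  rw [Fin.sum_univ_eq_sum_range (fun i => if i < k ∨ i = m - 1 then A m i else 0) m]
  rw [← Finset.sum_filter]

lemma A_one : A 1 0 = 1 := by
  rw [show A 1 0 = Nat.card {π : Equiv.Perm (Fin 1) //
    Avoids12d3 π ∧ ∃ h : 0 < 1 ∧ 0 < 1, π ⟨0, h.1⟩ = ⟨0, h.2⟩} from rfl,
    Nat.card_eq_one_iff_unique]
  constructor
  · exact ⟨fun a b => Subtype.ext (Equiv.ext fun x => Subsingleton.elim _ _)⟩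
  · refine ⟨⟨Equiv.refl _, ?_, ⟨⟨Nat.one_pos, Nat.one_pos⟩, Subsingleton.elim _ _⟩⟩⟩
    rintro ⟨i, j, h, -⟩
    have : i.1 + 1 < 1 := h
    omega

lemma A_rec_top (m : ℕ) (hm : 0 < m) : A (m + 1) m = ∑ v ∈ Finset.range m, A m v := by
  rw [A_rec m m hm (by omega)]
  congr 1
  rw [Finset.filter_true_of_mem]
  intro v hv
  simp only [mem_range] at hv
  omega

lemma A_rec_mid (m k : ℕ) (hm : 0 < m) (hk : k < m) :
    A (m + 1) k = (∑ v ∈ Finset.range k, A m v) + A m (m - 1) := by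
  rw [A_rec m k hm (by omega)]
  have hset : (Finset.range m).filter (fun v => v < k ∨ v = m - 1)
      = insert (m - 1) (Finset.range k) := by
    ext x
    simp only [mem_filter, mem_range, Finset.mem_insert]
    omega
  rw [hset, Finset.sum_insert (by simp only [mem_range]; omega), add_comm]

noncomputable def FF (n c : ℕ) : ℤ :=
  ∑ i ∈ range (n - 1 - c), (-1 : ℤ) ^ i * ((n - 2 - c).choose i) * (bell (n - 1 - i) : ℤ)

lemma hockey (p i : ℕ) (hi : i < p) : ∑ j ∈ range p, j.choose i = p.choose (i + 1) := by
  have h1 : ∑ j ∈ range p, j.choose i = ∑ j ∈ Finset.Icc i (p - 1), j.choose i := by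
    refine (Finset.sum_subset ?_ ?_).symm
    · intro x hx
      simp only [Finset.mem_Icc, mem_range] at *
      omega
    · intro x hx hx2
      simp only [Finset.mem_Icc, mem_range] at *
      exact Nat.choose_eq_zero_of_lt (by omega)
  rw [h1, Nat.sum_Icc_choose]
  congr 1
  omega

lemma pascal_step (q : ℕ) (hq : 1 ≤ q) (gb : ℕ → ℤ) :
    ∑ i ∈ range (q + 1), (-1 : ℤ) ^ i * (q.choose i) * gb i
      = (∑ i ∈ range q, (-1 : ℤ) ^ i * ((q - 1).choose i) * gb i)
        - ∑ i ∈ range q, (-1 : ℤ) ^ i * ((q - 1).choose i) * gb (i + 1) := by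
  obtain ⟨p, rfl⟩ : ∃ p, q = p + 1 := ⟨q - 1, by omega⟩
  simp only [Nat.add_sub_cancel]
  rw [Finset.sum_range_succ' (fun i => (-1 : ℤ) ^ i * ((p + 1).choose i) * gb i) (p + 1),
    Finset.sum_range_succ' (fun i => (-1 : ℤ) ^ i * (p.choose i) * gb i) p]
  have main : ∀ i ∈ range (p + 1), (-1 : ℤ) ^ (i + 1) * ((p + 1).choose (i + 1)) * gb (i + 1)
      = ((-1 : ℤ) ^ (i + 1) * (p.choose (i + 1)) * gb (i + 1))
        - (-1 : ℤ) ^ i * (p.choose i) * gb (i + 1) := by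
    intro i _
    rw [Nat.choose_succ_succ]
    push_cast
    ring
  rw [Finset.sum_congr rfl main, Finset.sum_sub_distrib]
  have hext : ∑ i ∈ range (p + 1), (-1 : ℤ) ^ (i + 1) * (p.choose (i + 1)) * gb (i + 1)
      = ∑ i ∈ range p, (-1 : ℤ) ^ (i + 1) * (p.choose (i + 1)) * gb (i + 1) := by
    rw [Finset.sum_range_succ, Nat.choose_eq_zero_of_lt (by omega)]
    simp
  rw [hext, Nat.choose_zero_right, Nat.choose_zero_right]
  ring

lemma sumA (p : ℕ)
    (ih : ∀ c < p + 1, (A (p + 1) c : ℤ) = if c = p then (bell p : ℤ) else FF (p + 1) c) :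
    ∑ v ∈ range (p + 1), (A (p + 1) v : ℤ) = (bell (p + 1) : ℤ) := by
  rw [Finset.sum_range_succ]
  have hlast : (A (p + 1) p : ℤ) = bell p := by
    rw [ih p (by omega), if_pos rfl]
  rw [hlast]
  have hmid : ∀ v ∈ range p, (A (p + 1) v : ℤ) = FF (p + 1) v := by
    intro v hv
    simp only [mem_range] at hv
    rw [ih v (by omega), if_neg (by omega)]
  rw [Finset.sum_congr rfl hmid]
  have hFF : ∑ v ∈ range p, FF (p + 1) v = (bell (p + 1) : ℤ) - bell p := by
    have h1 : ∑ v ∈ range p, FF (p + 1) v = ∑ j ∈ range p, FF (p + 1) (p - 1 - j) :=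
      (Finset.sum_range_reflect (fun v => FF (p + 1) v) p).symm
    have h2 : ∀ j ∈ range p, FF (p + 1) (p - 1 - j)
        = ∑ i ∈ range p, (-1 : ℤ) ^ i * (j.choose i) * (bell (p - i) : ℤ) := by
      intro j hj
      simp only [mem_range] at hj
      simp only [FF]
      rw [show p + 1 - 1 - (p - 1 - j) = j + 1 by omega]
      have e1 : ∀ i ∈ range (j + 1),
          (-1 : ℤ) ^ i * ((p + 1 - 2 - (p - 1 - j)).choose i) * (bell (p + 1 - 1 - i) : ℤ)
          = (-1 : ℤ) ^ i * (j.choose i) * (bell (p - i) : ℤ) := by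
        intro i _
        rw [show p + 1 - 2 - (p - 1 - j) = j by omega, show p + 1 - 1 - i = p - i by omega]
      rw [Finset.sum_congr rfl e1]
      refine Finset.sum_subset (by intro x hx; simp only [mem_range] at *; omega) ?_
      intro i hi hi2
      simp only [mem_range] at hi hi2
      rw [Nat.choose_eq_zero_of_lt (by omega)]
      simp
    rw [h1, Finset.sum_congr rfl h2, Finset.sum_comm]
    have h4 : ∀ i ∈ range p, ∑ j ∈ range p, (-1 : ℤ) ^ i * (j.choose i) * (bell (p - i) : ℤ)
        = (-1 : ℤ) ^ i * (p.choose (i + 1)) * (bell (p - i) : ℤ) := by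
      intro i hi
      simp only [mem_range] at hi
      rw [← Finset.sum_mul, ← Finset.mul_sum, ← Nat.cast_sum, hockey p i hi]
    rw [Finset.sum_congr rfl h4]
    -- now use bell_inv
    have h5 := bell_inv p
    rw [Finset.sum_range_succ' (fun i => (-1 : ℤ) ^ i * (p.choose i) * (bell (p + 1 - i) : ℤ)) p]
      at h5
    have h6 : ∀ i ∈ range p,
        (-1 : ℤ) ^ (i + 1) * (p.choose (i + 1)) * (bell (p + 1 - (i + 1)) : ℤ)
        = -((-1 : ℤ) ^ i * (p.choose (i + 1)) * (bell (p - i) : ℤ)) := by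
      intro i _
      rw [show p + 1 - (i + 1) = p - i by omega, pow_succ]
      ring
    rw [Finset.sum_congr rfl h6, Finset.sum_neg_distrib] at h5
    simp only [pow_zero, Nat.choose_zero_right, Nat.cast_one, one_mul, Nat.sub_zero] at h5
    linarith
  rw [hFF]
  ring

lemma key : ∀ m, ∀ c < m + 1, (A (m + 1) c : ℤ) = if c = m then (bell m : ℤ) else FF (m + 1) c := by
  intro m
  induction m with
  | zero =>
    intro c hc
    have hc0 : c = 0 := by omega
    subst hc0
    rw [if_pos rfl, A_one, bell_zero]
  | succ p ih =>
    have hT := sumA p ih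
    have main : ∀ d, ∀ c, c < p + 1 → p - c = d → (A (p + 2) c : ℤ) = FF (p + 2) c := by
      intro d
      induction d with
      | zero =>
        intro c hc hd
        rw [show c = p from by omega]
        have h1 : A (p + 1 + 1) p = (∑ v ∈ range p, A (p + 1) v) + A (p + 1) (p + 1 - 1) :=
          A_rec_mid (p + 1) p (by omega) (by omega)
        rw [show p + 1 - 1 = p from by omega] at h1
        have h2 : (A (p + 2) p : ℤ) = ∑ v ∈ range (p + 1), (A (p + 1) v : ℤ) := by
          rw [show p + 2 = p + 1 + 1 from rfl, h1, Finset.sum_range_succ]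
          push_cast
          ring
        rw [h2, hT]
        simp only [FF]
        rw [show p + 2 - 1 - p = 1 from by omega, Finset.sum_range_one,
          show p + 2 - 2 - p = 0 from by omega, show p + 2 - 1 - 0 = p + 1 from by omega]
        simp
      | succ d ihd =>
        intro c hc hd
        have hc1 : c + 1 < p + 1 := by omega
        have e1 : A (p + 1 + 1) c = (∑ v ∈ range c, A (p + 1) v) + A (p + 1) (p + 1 - 1) :=
          A_rec_mid (p + 1) c (by omega) (by omega)
        have e2 : A (p + 1 + 1) (c + 1) = (∑ v ∈ range (c + 1), A (p + 1) v) + A (p + 1) (p + 1 - 1) :=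
          A_rec_mid (p + 1) (c + 1) (by omega) (by omega)
        have e3 : (A (p + 2) c : ℤ) = (A (p + 2) (c + 1) : ℤ) - (A (p + 1) c : ℤ) := by
          rw [show p + 2 = p + 1 + 1 from rfl, e1, e2, Finset.sum_range_succ]
          push_cast
          ring
        rw [e3, ihd (c + 1) hc1 (by omega), ih c (by omega), if_neg (by omega)]
        have hq : 1 ≤ p - c := by omega
        set q := p - c with hqd
        have f1 : FF (p + 2) c = ∑ i ∈ range (q + 1), (-1 : ℤ) ^ i * (q.choose i) * (bell (p + 1 - i) : ℤ) := by
          simp only [FF]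
          rw [show p + 2 - 1 - c = q + 1 from by omega]
          refine Finset.sum_congr rfl fun i _ => ?_
          rw [show p + 2 - 2 - c = q from by omega, show p + 2 - 1 - i = p + 1 - i from by omega]
        have f2 : FF (p + 2) (c + 1) = ∑ i ∈ range q, (-1 : ℤ) ^ i * ((q - 1).choose i) * (bell (p + 1 - i) : ℤ) := by
          simp only [FF]
          rw [show p + 2 - 1 - (c + 1) = q from by omega]
          refine Finset.sum_congr rfl fun i _ => ?_
          rw [show p + 2 - 2 - (c + 1) = q - 1 from by omega, show p + 2 - 1 - i = p + 1 - i from by omega]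
        have f3 : FF (p + 1) c = ∑ i ∈ range q, (-1 : ℤ) ^ i * ((q - 1).choose i) * (bell (p + 1 - (i + 1)) : ℤ) := by
          simp only [FF]
          rw [show p + 1 - 1 - c = q from by omega]
          refine Finset.sum_congr rfl fun i _ => ?_
          rw [show p + 1 - 2 - c = q - 1 from by omega, show p + 1 - 1 - i = p + 1 - (i + 1) from by omega]
        rw [f1, f2, f3]
        exact (pascal_step q hq (fun i => (bell (p + 1 - i) : ℤ))).symm
    intro c hc
    by_cases hcp : c = p + 1
    · subst hcp
      rw [if_pos rfl]
      have h1 : A (p + 1 + 1) (p + 1) = ∑ v ∈ range (p + 1), A (p + 1) v :=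
        A_rec_top (p + 1) (by omega)
      rw [h1]
      push_cast
      exact hT
    · rw [if_neg hcp]
      exact main (p - c) c (by omega) rfl

theorem bell_distribution (n : ℕ) (hn : 1 ≤ n) :
    Nat.card {π : Equiv.Perm (Fin n) // Avoids12d3 π ∧ π ⟨0, by omega⟩ = ⟨n - 1, by omega⟩} = bell (n - 1) ∧
    ∀ k : ℕ, (hk1 : 1 ≤ k) → (hk2 : k ≤ n - 1) →
      (Nat.card {π : Equiv.Perm (Fin n) // Avoids12d3 π ∧ π ⟨0, by omega⟩ = ⟨k - 1, by omega⟩} : ℤ) =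
        ∑ i ∈ Finset.range (n - k), (-1 : ℤ) ^ i * (((n - k - 1)).choose i) * (bell (n - 1 - i) : ℤ) := by
  obtain ⟨m, rfl⟩ : ∃ m, n = m + 1 := ⟨n - 1, by omega⟩
  constructor
  · have h1 : (A (m + 1) m : ℤ) = bell m := by rw [key m m (by omega), if_pos rfl]
    have h2 : A (m + 1) m = bell m := by exact_mod_cast h1
    rw [A_eq (m + 1) m (by omega) (by omega)] at h2
    exact h2
  · intro k hk1 hk2
    have hc : k - 1 < m + 1 := by omega
    have h1 : (A (m + 1) (k - 1) : ℤ) = FF (m + 1) (k - 1) := by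
      rw [key m (k - 1) hc, if_neg (by omega)]
    have h5 : FF (m + 1) (k - 1) = ∑ i ∈ Finset.range (m + 1 - k),
        (-1 : ℤ) ^ i * ((m + 1 - k - 1).choose i) * (bell (m + 1 - 1 - i) : ℤ) := by
      simp only [FF]
      rw [show m + 1 - 1 - (k - 1) = m + 1 - k from by omega]
      refine Finset.sum_congr rfl fun i _ => ?_
      rw [show m + 1 - 2 - (k - 1) = m + 1 - k - 1 from by omega]
    have hX := h1.trans h5
    rw [A_eq (m + 1) (k - 1) (by omega) hc] at hX
    exact hX
end

section
/- For every n ≥ 1 and every k with 1 ≤ k ≤ n, the number N of permutations π ∈ S_n that avoid the generalized pattern 2-31 and satisfy π_n = k is ((n-k+1)/n)·C(n+k-2, n-1); equivalently, n · N = (n-k+1) · C(n+k-2, n-1). -/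
/-- `π` avoids the generalized pattern 2-31. -/
def Avoids2d31 {n : ℕ} (π : Equiv.Perm (Fin n)) : Prop :=
  ¬ ∃ (i j : Fin n) (h : j.1 + 1 < n), i < j ∧ π ⟨j.1 + 1, h⟩ < π i ∧ π i < π j

namespace Ballot

def uf (K : ℕ) {m : ℕ} (w : Fin m) : Fin (m + 1) :=
  if h : w.val < K then ⟨w.val, by have := w.isLt; omega⟩ else ⟨w.val + 1, by omega⟩

def df (K : ℕ) {m : ℕ} (hm : 1 ≤ m) (hK : K ≤ m) (v : Fin (m + 1)) : Fin m :=
  if h : v.val < K then ⟨v.val, by omega⟩ else ⟨v.val - 1, by have := v.isLt; omega⟩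

lemma uf_val (K : ℕ) {m : ℕ} (w : Fin m) :
    (uf K w).val = if w.val < K then w.val else w.val + 1 := by
  unfold uf; split <;> rfl

lemma df_val (K : ℕ) {m : ℕ} (hm : 1 ≤ m) (hK : K ≤ m) (v : Fin (m + 1)) :
    (df K hm hK v).val = if v.val < K then v.val else v.val - 1 := by
  unfold df; split <;> rfl

lemma uf_val_ne (K : ℕ) {m : ℕ} (w : Fin m) : (uf K w).val ≠ K := by
  rw [uf_val]; split_ifs <;> omega

lemma df_uf (K : ℕ) {m : ℕ} (hm : 1 ≤ m) (hK : K ≤ m) (w : Fin m) :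
    df K hm hK (uf K w) = w := by
  apply Fin.ext; rw [df_val, uf_val]; have := w.isLt; split_ifs <;> omega

lemma uf_df (K : ℕ) {m : ℕ} (hm : 1 ≤ m) (hK : K ≤ m) (v : Fin (m + 1)) (hv : v.val ≠ K) :
    uf K (df K hm hK v) = v := by
  apply Fin.ext; rw [uf_val, df_val]; have := v.isLt; split_ifs <;> omega

lemma uf_lt_uf (K : ℕ) {m : ℕ} (w w' : Fin m) : uf K w < uf K w' ↔ w < w' := by
  rw [Fin.lt_def, Fin.lt_def, uf_val, uf_val]; split_ifs <;> omega

lemma df_lt_df (K : ℕ) {m : ℕ} (hm : 1 ≤ m) (hK : K ≤ m) (v v' : Fin (m + 1))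
    (hv : v.val ≠ K) (hv' : v'.val ≠ K) : df K hm hK v < df K hm hK v' ↔ v < v' := by
  rw [Fin.lt_def, Fin.lt_def, df_val, df_val]; split_ifs <;> omega


variable {m K : ℕ}

def permDown (hm : 1 ≤ m) (hK : K ≤ m) (π : Equiv.Perm (Fin (m + 1)))
    (hπ : π ⟨m, by omega⟩ = ⟨K, by omega⟩) : Equiv.Perm (Fin m) where
  toFun i := df K hm hK (π ⟨i.val, by have := i.isLt; omega⟩)
  invFun w := ⟨(π.symm (uf K w)).val, by
    have h2 := (π.symm (uf K w)).isLt
    have h1 : (π.symm (uf K w)).val ≠ m := by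
      intro h
      have : π.symm (uf K w) = (⟨m, by omega⟩ : Fin (m+1)) := Fin.ext h
      have := congrArg π this
      rw [Equiv.apply_symm_apply, hπ] at this
      exact uf_val_ne K w (congrArg Fin.val this)
    omega⟩
  left_inv i := by
    have hne : (π ⟨i.val, by have := i.isLt; omega⟩).val ≠ K := by
      intro h
      have : π ⟨i.val, by have := i.isLt; omega⟩ = π ⟨m, by omega⟩ := by
        rw [hπ]; exact Fin.ext h
      have := π.injective this
      have := congrArg Fin.val this
      simp at this; omega
    apply Fin.ext
    simp only [uf_df K hm hK _ hne, Equiv.symm_apply_apply]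
  right_inv w := by
    have : (⟨(π.symm (uf K w)).val, (π.symm (uf K w)).isLt⟩ : Fin (m+1)) = π.symm (uf K w) :=
      Fin.ext rfl
    simp only [this, Equiv.apply_symm_apply, df_uf]

lemma permDown_apply (hm : 1 ≤ m) (hK : K ≤ m) (π : Equiv.Perm (Fin (m + 1)))
    (hπ : π ⟨m, by omega⟩ = ⟨K, by omega⟩) (i : Fin m) :
    permDown hm hK π hπ i = df K hm hK (π ⟨i.val, by have := i.isLt; omega⟩) := rfl

def permUp (hm : 1 ≤ m) (hK : K ≤ m) (σ : Equiv.Perm (Fin m)) : Equiv.Perm (Fin (m + 1)) where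
  toFun v := if h : v.val < m then uf K (σ ⟨v.val, h⟩) else ⟨K, by omega⟩
  invFun v := if h : v.val = K then ⟨m, by omega⟩
    else ⟨(σ.symm (df K hm hK v)).val, by have := (σ.symm (df K hm hK v)).isLt; omega⟩
  left_inv v := by
    dsimp only
    by_cases h : v.val < m
    · rw [dif_pos h, dif_neg (uf_val_ne K _)]
      apply Fin.ext
      simp only [df_uf, Equiv.symm_apply_apply]
    · rw [dif_neg h]
      simp only [dif_pos rfl]
      apply Fin.ext
      have := v.isLt; simp; omega
  right_inv v := by
    dsimp only
    by_cases h : v.val = K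
    · rw [dif_pos h, dif_neg (by simp : ¬ (m < m))]
      exact Fin.ext h.symm
    · rw [dif_neg h, dif_pos (σ.symm (df K hm hK v)).isLt]
      have : (⟨(σ.symm (df K hm hK v)).val, (σ.symm (df K hm hK v)).isLt⟩ : Fin m)
          = σ.symm (df K hm hK v) := Fin.ext rfl
      rw [this, Equiv.apply_symm_apply, uf_df K hm hK v h]

lemma permUp_apply_lt (hm : 1 ≤ m) (hK : K ≤ m) (σ : Equiv.Perm (Fin m)) (v : Fin (m+1))
    (h : v.val < m) : permUp hm hK σ v = uf K (σ ⟨v.val, h⟩) := by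
  show (if h : v.val < m then uf K (σ ⟨v.val, h⟩) else ⟨K, by omega⟩) = _
  rw [dif_pos h]

lemma permUp_last (hm : 1 ≤ m) (hK : K ≤ m) (σ : Equiv.Perm (Fin m)) :
    permUp hm hK σ ⟨m, by omega⟩ = ⟨K, by omega⟩ := by
  show (if h : m < m then _ else (⟨K, by omega⟩ : Fin (m+1))) = _
  rw [dif_neg (by omega)]

lemma up_down (hm : 1 ≤ m) (hK : K ≤ m) (π : Equiv.Perm (Fin (m + 1)))
    (hπ : π ⟨m, by omega⟩ = ⟨K, by omega⟩) :
    permUp hm hK (permDown hm hK π hπ) = π := by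
  apply Equiv.ext
  intro v
  by_cases h : v.val < m
  · rw [permUp_apply_lt hm hK _ v h, permDown_apply]
    have hv : (⟨v.val, by omega⟩ : Fin (m+1)) = v := Fin.ext rfl
    rw [hv]
    apply uf_df
    intro hc
    have : π v = π ⟨m, by omega⟩ := by rw [hπ]; exact Fin.ext hc
    have := congrArg Fin.val (π.injective this)
    simp at this; omega
  · have hv : v = (⟨m, by omega⟩ : Fin (m+1)) := Fin.ext (by have := v.isLt; simp; omega)
    rw [hv, permUp_last, hπ]

lemma down_up (hm : 1 ≤ m) (hK : K ≤ m) (σ : Equiv.Perm (Fin m)) :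
    permDown hm hK (permUp hm hK σ) (permUp_last hm hK σ) = σ := by
  apply Equiv.ext
  intro i
  rw [permDown_apply, permUp_apply_lt hm hK σ _ i.isLt]
  have : (⟨i.val, i.isLt⟩ : Fin m) = i := Fin.ext rfl
  rw [this, df_uf]


lemma ne_K_of_ne_last (hm : 1 ≤ m) (hK : K ≤ m) (π : Equiv.Perm (Fin (m + 1)))
    (hπ : π ⟨m, by omega⟩ = ⟨K, by omega⟩) (x : Fin (m + 1)) (hx : x.val ≠ m) :
    (π x).val ≠ K := by
  intro hcon
  have h1 : π x = π ⟨m, by omega⟩ := by rw [hπ]; exact Fin.ext hcon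
  have h2 := congrArg Fin.val (π.injective h1)
  simp only [Fin.val_mk] at h2
  omega

set_option maxHeartbeats 1000000 in
lemma avoids_down (hm : 1 ≤ m) (hK : K ≤ m) (π : Equiv.Perm (Fin (m + 1)))
    (hπ : π ⟨m, by omega⟩ = ⟨K, by omega⟩) (hA : Avoids2d31 π) :
    Avoids2d31 (permDown hm hK π hπ) ∧ ((permDown hm hK π hπ) ⟨m - 1, Nat.sub_lt hm Nat.one_pos⟩).val ≤ K := by
  constructor
  · rintro ⟨i, j, h, hij, h1, h2⟩
    apply hA
    have hij' := Fin.lt_def.mp hij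
    rw [permDown_apply, permDown_apply] at h1 h2
    have ne1 : (π ⟨j.val + 1, by omega⟩).val ≠ K :=
      ne_K_of_ne_last hm hK π hπ _ (by simp only [Fin.val_mk]; omega)
    have ne2 : (π ⟨i.val, by omega⟩).val ≠ K :=
      ne_K_of_ne_last hm hK π hπ _ (by simp only [Fin.val_mk]; have := j.isLt; omega)
    have ne3 : (π ⟨j.val, by omega⟩).val ≠ K :=
      ne_K_of_ne_last hm hK π hπ _ (by simp only [Fin.val_mk]; omega)
    have g1 := (df_lt_df K hm hK _ _ ne1 ne2).mp h1
    have g2 := (df_lt_df K hm hK _ _ ne2 ne3).mp h2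
    exact ⟨⟨i.val, by omega⟩, ⟨j.val, by omega⟩, by simp only [Fin.val_mk]; omega,
      Fin.lt_def.mpr (by simp only [Fin.val_mk]; omega), g1, g2⟩
  · by_contra hc
    push_neg at hc
    rw [permDown_apply] at hc
    have hj : (m - 1 : ℕ) < m + 1 := by omega
    have h0 : K < (df K hm hK (π ⟨m - 1, hj⟩)).val := hc
    rw [df_val] at h0
    have hv2 : K + 2 ≤ (π ⟨m - 1, hj⟩).val := by split_ifs at h0 <;> omega
    have hb : (π ⟨m - 1, hj⟩).val < m + 1 := (π _).isLt
    have hKm : K + 1 < m + 1 := by omega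
    obtain ⟨p, hpt⟩ : ∃ p, π p = ⟨K + 1, hKm⟩ := ⟨π.symm _, Equiv.apply_symm_apply _ _⟩
    have hvp : (π p).val = K + 1 := congrArg Fin.val hpt
    have hp_m : p.val ≠ m := by
      intro hcon
      have h1 : p = (⟨m, by omega⟩ : Fin (m + 1)) := Fin.ext hcon
      rw [h1, hπ] at hpt
      have := congrArg Fin.val hpt
      simp only [Fin.val_mk] at this
      omega
    have hp_m1 : p.val ≠ m - 1 := by
      intro hcon
      have h1 : p = (⟨m - 1, hj⟩ : Fin (m + 1)) := Fin.ext hcon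
      rw [h1] at hvp
      omega
    apply hA
    have hlast : (m : ℕ) < m + 1 := by omega
    have hmk : (⟨(⟨m - 1, hj⟩ : Fin (m + 1)).val + 1, by simp only [Fin.val_mk]; omega⟩ : Fin (m + 1))
        = ⟨m, hlast⟩ := Fin.ext (by simp only [Fin.val_mk]; omega)
    refine ⟨p, ⟨m - 1, hj⟩, by simp only [Fin.val_mk]; omega, ?_, ?_, ?_⟩
    · refine Fin.lt_def.mpr ?_
      simp only [Fin.val_mk]
      have := p.isLt
      omega
    · rw [hmk, hπ]
      refine Fin.lt_def.mpr ?_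
      simp only [Fin.val_mk]
      omega
    · refine Fin.lt_def.mpr ?_
      omega

lemma avoids_up (hm : 1 ≤ m) (hK : K ≤ m) (σ : Equiv.Perm (Fin m)) (hA : Avoids2d31 σ)
    (hlt : (σ ⟨m - 1, Nat.sub_lt hm Nat.one_pos⟩).val ≤ K) : Avoids2d31 (permUp hm hK σ) := by
  rintro ⟨i, j, h, hij, h1, h2⟩
  have hjm : j.val < m := by omega
  have him : i.val < m := by have := Fin.lt_def.mp hij; omega
  by_cases hc : j.val + 1 < m
  · apply hA
    rw [permUp_apply_lt hm hK σ _ (show (⟨j.val + 1, h⟩ : Fin (m+1)).val < m from hc),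
        permUp_apply_lt hm hK σ i him] at h1
    rw [permUp_apply_lt hm hK σ i him, permUp_apply_lt hm hK σ j hjm] at h2
    exact ⟨⟨i.val, him⟩, ⟨j.val, hjm⟩, hc, Fin.lt_def.mpr (Fin.lt_def.mp hij),
      (uf_lt_uf K _ _).mp h1, (uf_lt_uf K _ _).mp h2⟩
  · have hj1 : j.val = m - 1 := by omega
    have e1 : (⟨j.val + 1, h⟩ : Fin (m + 1)) = ⟨m, by omega⟩ := Fin.ext (by simp only [Fin.val_mk]; omega)
    rw [e1, permUp_last] at h1
    rw [permUp_apply_lt hm hK σ i him] at h1 h2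
    rw [permUp_apply_lt hm hK σ j hjm] at h2
    have hlt' : (σ (⟨j.val, hjm⟩ : Fin m)).val ≤ K := by
      have e : (⟨j.val, hjm⟩ : Fin m) = ⟨m - 1, Nat.sub_lt hm Nat.one_pos⟩ := Fin.ext (by simp only [Fin.val_mk]; omega)
      rw [e]; exact hlt
    rw [Fin.lt_def] at h1 h2
    simp only [uf_val, Fin.val_mk] at h1 h2
    split_ifs at h1 h2 <;> omega

lemma card_bij (m k : ℕ) (hm : 1 ≤ m) (hk1 : 1 ≤ k) (hk : k ≤ m + 1) :
    Nat.card {π : Equiv.Perm (Fin (m + 1)) // Avoids2d31 π ∧ π ⟨m, by omega⟩ = ⟨k - 1, by omega⟩} =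
    Nat.card {σ : Equiv.Perm (Fin m) // Avoids2d31 σ ∧ (σ ⟨m - 1, Nat.sub_lt hm Nat.one_pos⟩).val < k} := by
  have hK : k - 1 ≤ m := by omega
  apply Nat.card_congr
  refine ⟨fun p => ⟨permDown hm hK p.1 p.2.2, (avoids_down hm hK p.1 p.2.2 p.2.1).1,
      by have := (avoids_down hm hK p.1 p.2.2 p.2.1).2; omega⟩,
    fun s => ⟨permUp hm hK s.1, avoids_up hm hK s.1 s.2.1 (by have := s.2.2; omega),
      permUp_last hm hK s.1⟩,
    fun p => Subtype.ext (up_down hm hK p.1 p.2.2),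
    fun s => Subtype.ext (down_up hm hK s.1)⟩

lemma card_split (m k : ℕ) (hm : 1 ≤ m) (hk2 : 2 ≤ k) (hk : k ≤ m) :
    Nat.card {σ : Equiv.Perm (Fin m) // Avoids2d31 σ ∧ (σ ⟨m - 1, Nat.sub_lt hm Nat.one_pos⟩).val < k}
      = Nat.card {σ : Equiv.Perm (Fin m) // Avoids2d31 σ ∧ (σ ⟨m - 1, Nat.sub_lt hm Nat.one_pos⟩).val < k - 1}
      + Nat.card {σ : Equiv.Perm (Fin m) // Avoids2d31 σ ∧ σ ⟨m - 1, Nat.sub_lt hm Nat.one_pos⟩ = ⟨k - 1, by omega⟩} := by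
  classical
  have e : ∀ σ : Equiv.Perm (Fin m),
      (Avoids2d31 σ ∧ (σ ⟨m - 1, Nat.sub_lt hm Nat.one_pos⟩).val < k) ↔
      ((fun σ : Equiv.Perm (Fin m) => Avoids2d31 σ ∧ (σ ⟨m - 1, Nat.sub_lt hm Nat.one_pos⟩).val < k - 1) σ ∨
       (fun σ : Equiv.Perm (Fin m) => Avoids2d31 σ ∧ σ ⟨m - 1, Nat.sub_lt hm Nat.one_pos⟩ = ⟨k - 1, by omega⟩) σ) := by
    intro σ
    simp only [Fin.ext_iff, Fin.val_mk]
    constructor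
    · rintro ⟨hA, hlt⟩
      by_cases hx : (σ ⟨m - 1, Nat.sub_lt hm Nat.one_pos⟩).val < k - 1
      · exact Or.inl ⟨hA, hx⟩
      · exact Or.inr ⟨hA, by omega⟩
    · rintro (⟨hA, hx⟩ | ⟨hA, hx⟩) <;> exact ⟨hA, by omega⟩
  have hdisj : Disjoint
      (fun σ : Equiv.Perm (Fin m) => Avoids2d31 σ ∧ (σ ⟨m - 1, Nat.sub_lt hm Nat.one_pos⟩).val < k - 1)
      (fun σ : Equiv.Perm (Fin m) => Avoids2d31 σ ∧ σ ⟨m - 1, Nat.sub_lt hm Nat.one_pos⟩ = ⟨k - 1, by omega⟩) := by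
    rw [Pi.disjoint_iff]
    intro σ
    rw [Prop.disjoint_iff]
    rintro ⟨⟨-, h1⟩, ⟨-, h2⟩⟩
    rw [Fin.ext_iff] at h2
    simp only [Fin.val_mk] at h2
    omega
  rw [Nat.card_congr (Equiv.subtypeEquivRight e)]
  rw [Nat.card_congr (subtypeOrEquiv _ _ hdisj)]
  exact Nat.card_sum

lemma card_base : Nat.card {π : Equiv.Perm (Fin 1) // Avoids2d31 π ∧ π ⟨0, by omega⟩ = ⟨0, by omega⟩} = 1 := by
  have h : ∀ π : Equiv.Perm (Fin 1), Avoids2d31 π ∧ π ⟨0, by omega⟩ = ⟨0, by omega⟩ := by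
    intro π
    constructor
    · rintro ⟨i, j, h, -⟩
      omega
    · exact Subsingleton.elim _ _
  rw [Nat.card_congr (Equiv.subtypeUnivEquiv h)]
  simp [Nat.card_eq_fintype_card]

lemma binom_id (m k : ℕ) (hm : 1 ≤ m) (hk2 : 2 ≤ k) (hk : k ≤ m) :
    m * ((m + 1 - k + 1) * ((m + 1 + k - 2).choose m))
      = m * ((m + 1 - (k - 1) + 1) * ((m + 1 + (k - 1) - 2).choose m))
      + (m + 1) * ((m - k + 1) * ((m + k - 2).choose (m - 1))) := by
  obtain ⟨c, rfl⟩ : ∃ c, k = c + 2 := ⟨k - 2, by omega⟩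
  obtain ⟨d, rfl⟩ : ∃ d, m = c + 2 + d := ⟨m - (c + 2), by omega⟩
  rw [show c + 2 + d + 1 - (c + 2) + 1 = d + 2 from by omega,
      show c + 2 + d + 1 + (c + 2) - 2 = 2 * c + d + 3 from by omega,
      show c + 2 + d + 1 - (c + 2 - 1) + 1 = d + 3 from by omega,
      show c + 2 + d + 1 + (c + 2 - 1) - 2 = 2 * c + d + 2 from by omega,
      show c + 2 + d - (c + 2) + 1 = d + 1 from by omega,
      show c + 2 + d + (c + 2) - 2 = 2 * c + d + 2 from by omega,
      show c + 2 + d - 1 = c + d + 1 from by omega,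
      show c + 2 + d = c + d + 2 from by omega]
  have hP : (2 * c + d + 3).choose (c + d + 2)
      = (2 * c + d + 2).choose (c + d + 1) + (2 * c + d + 2).choose (c + d + 2) := by
    rw [show 2 * c + d + 3 = (2 * c + d + 2) + 1 from by ring,
        show c + d + 2 = (c + d + 1) + 1 from by ring]
    exact Nat.choose_succ_succ' _ _
  have hS : (2 * c + d + 2).choose (c + d + 2) * (c + d + 2)
      = (2 * c + d + 2).choose (c + d + 1) * (c + 1) := by
    have h := Nat.choose_succ_right_eq (2 * c + d + 2) (c + d + 1)
    rw [show (c + d + 1) + 1 = c + d + 2 from by ring] at h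
    rw [show 2 * c + d + 2 - (c + d + 1) = c + 1 from by omega] at h
    exact h
  zify at hP hS ⊢
  linear_combination ((c : ℤ) + d + 2) * ((d : ℤ) + 2) * hP - hS

lemma two_mul_choose (m : ℕ) (hm : 1 ≤ m) : (2 * m).choose m = 2 * (2 * m - 1).choose m := by
  obtain ⟨a, rfl⟩ : ∃ a, m = a + 1 := ⟨m - 1, by omega⟩
  rw [show 2 * (a + 1) - 1 = 2 * a + 1 from by omega,
      show 2 * (a + 1) = (2 * a + 1) + 1 from by ring]
  rw [Nat.choose_succ_succ']
  have hsymm : (2 * a + 1).choose a = (2 * a + 1).choose (a + 1) := by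
    have h := Nat.choose_symm (show a + 1 ≤ 2 * a + 1 by omega)
    rw [show 2 * a + 1 - (a + 1) = a from by omega] at h
    exact h
  omega

lemma arith (m k c1 c2 : ℕ) (hm : 1 ≤ m) (hk2 : 2 ≤ k) (hkm : k ≤ m)
    (h1 : (m + 1) * c1 = (m + 1 - (k - 1) + 1) * ((m + 1 + (k - 1) - 2).choose m))
    (h2 : m * c2 = (m - k + 1) * ((m + k - 2).choose (m - 1))) :
    (m + 1) * (c1 + c2) = (m + 1 - k + 1) * ((m + 1 + k - 2).choose m) := by
  apply Nat.eq_of_mul_eq_mul_left (show 0 < m by omega)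
  calc m * ((m + 1) * (c1 + c2))
      = m * ((m + 1) * c1) + (m + 1) * (m * c2) := by ring
    _ = m * ((m + 1 - (k - 1) + 1) * ((m + 1 + (k - 1) - 2).choose m))
        + (m + 1) * ((m - k + 1) * ((m + k - 2).choose (m - 1))) := by rw [h1, h2]
    _ = m * ((m + 1 - k + 1) * ((m + 1 + k - 2).choose m)) :=
        (binom_id m k hm hk2 hkm).symm

lemma key : ∀ (s n k : ℕ) (_ : n + k ≤ s) (hn : 1 ≤ n) (hk1 : 1 ≤ k) (hkn : k ≤ n),
    n * Nat.card {π : Equiv.Perm (Fin n) // Avoids2d31 π ∧ π ⟨n - 1, Nat.sub_lt hn Nat.one_pos⟩ = ⟨k - 1, by omega⟩}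
      = (n - k + 1) * (n + k - 2).choose (n - 1) := by
  intro s
  induction s with
  | zero => intro n k hs hn hk1 hkn; omega
  | succ s ih =>
    intro n k hs hn hk1 hkn
    rcases Nat.lt_or_ge n 2 with h2 | h2
    · -- n = 1
      have hn1 : n = 1 := by omega
      have hk1' : k = 1 := by omega
      subst hn1; subst hk1'
      have hb : Nat.card {π : Equiv.Perm (Fin 1) // Avoids2d31 π ∧ π ⟨1 - 1, by omega⟩ = ⟨1 - 1, by omega⟩} = 1 := card_base
      rw [hb]
      decide
    · obtain ⟨m, rfl⟩ : ∃ m, n = m + 1 := ⟨n - 1, by omega⟩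
      have hm : 1 ≤ m := by omega
      simp only [Nat.add_sub_cancel]
      rw [card_bij m k hm hk1 hkn]
      rcases Nat.lt_or_ge k 2 with hk2 | hk2
      · -- k = 1
        have hk1' : k = 1 := by omega
        subst hk1'
        have e1 : ∀ σ : Equiv.Perm (Fin m),
            (Avoids2d31 σ ∧ (σ ⟨m - 1, Nat.sub_lt hm Nat.one_pos⟩).val < 1) ↔
            (Avoids2d31 σ ∧ σ ⟨m - 1, Nat.sub_lt hm Nat.one_pos⟩ = ⟨1 - 1, by omega⟩) := by
          intro σ
          simp only [Fin.ext_iff, Fin.val_mk]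
          exact ⟨fun ⟨hA, h⟩ => ⟨hA, by omega⟩, fun ⟨hA, h⟩ => ⟨hA, by omega⟩⟩
        rw [Nat.card_congr (Equiv.subtypeEquivRight e1)]
        have h1 : m * Nat.card {σ : Equiv.Perm (Fin m) // Avoids2d31 σ ∧ σ ⟨m - 1, Nat.sub_lt hm Nat.one_pos⟩ = ⟨1 - 1, by omega⟩}
            = (m - 1 + 1) * (m + 1 - 2).choose (m - 1) :=
          ih m 1 (by omega) (by omega) (by omega) (by omega)
        rw [show m + 1 - 2 = m - 1 from by omega, Nat.choose_self, mul_one,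
            show m - 1 + 1 = m from by omega] at h1
        have hcard : Nat.card {σ : Equiv.Perm (Fin m) // Avoids2d31 σ ∧ σ ⟨m - 1, Nat.sub_lt hm Nat.one_pos⟩ = ⟨1 - 1, by omega⟩} = 1 := by
          have := Nat.eq_of_mul_eq_mul_left (show 0 < m by omega) (h1.trans (mul_one m).symm)
          exact this
        rw [hcard, show m + 1 - 1 + 1 = m + 1 from by omega,
            show m + 1 + 1 - 2 = m from by omega, Nat.choose_self]
      · rcases Nat.lt_or_ge k (m + 1) with hkm | hkm
        · -- 2 ≤ k ≤ m
          have hkm' : k ≤ m := by omega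
          rw [card_split m k hm hk2 hkm']
          rw [← card_bij m (k - 1) hm (by omega) (by omega)]
          have h1 : (m + 1) * Nat.card {π : Equiv.Perm (Fin (m + 1)) // Avoids2d31 π ∧ π ⟨m, by omega⟩ = ⟨k - 1 - 1, by omega⟩}
              = (m + 1 - (k - 1) + 1) * ((m + 1 + (k - 1) - 2).choose m) :=
            ih (m + 1) (k - 1) (by omega) (by omega) (by omega) (by omega)
          have h2 : m * Nat.card {σ : Equiv.Perm (Fin m) // Avoids2d31 σ ∧ σ ⟨m - 1, Nat.sub_lt hm Nat.one_pos⟩ = ⟨k - 1, by omega⟩}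
              = (m - k + 1) * ((m + k - 2).choose (m - 1)) :=
            ih m k (by omega) (by omega) (by omega) (by omega)
          exact arith m k _ _ hm hk2 hkm' h1 h2
          -- note: goal RHS uses (m + 1 - 1) inside choose; handled by defeq
        · -- k = m + 1
          have hk : k = m + 1 := by omega
          subst hk
          have e1 : ∀ σ : Equiv.Perm (Fin m),
              (Avoids2d31 σ ∧ (σ ⟨m - 1, Nat.sub_lt hm Nat.one_pos⟩).val < m + 1) ↔
              (Avoids2d31 σ ∧ (σ ⟨m - 1, Nat.sub_lt hm Nat.one_pos⟩).val < m) := by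
            intro σ
            have := (σ ⟨m - 1, Nat.sub_lt hm Nat.one_pos⟩).isLt
            exact ⟨fun ⟨hA, h⟩ => ⟨hA, by omega⟩, fun ⟨hA, h⟩ => ⟨hA, by omega⟩⟩
          rw [Nat.card_congr (Equiv.subtypeEquivRight e1)]
          rw [← card_bij m m hm (by omega) (by omega)]
          have h1 : (m + 1) * Nat.card {π : Equiv.Perm (Fin (m + 1)) // Avoids2d31 π ∧ π ⟨m, by omega⟩ = ⟨m - 1, by omega⟩}
              = (m + 1 - m + 1) * ((m + 1 + m - 2).choose m) :=
            ih (m + 1) m (by omega) (by omega) (by omega) (by omega)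
          rw [h1, show m + 1 - m + 1 = 2 from by omega,
              show m + 1 + m - 2 = 2 * m - 1 from by omega,
              show m + 1 - (m + 1) + 1 = 1 from by omega,
              show m + 1 + (m + 1) - 2 = 2 * m from by omega,
              two_mul_choose m hm]
          ring

end Ballot

theorem ballot_distribution (n k : ℕ) (hn : 1 ≤ n) (hk1 : 1 ≤ k) (hkn : k ≤ n) :
    n * Nat.card {π : Equiv.Perm (Fin n) // Avoids2d31 π ∧ π ⟨n - 1, by omega⟩ = ⟨k - 1, by omega⟩} = (n - k + 1) * (n + k - 2).choose (n - 1) := by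
  exact Ballot.key (n + k) n k le_rfl hn hk1 hkn
end
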